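/- Let K = [[A,B],[C,D]] be a real (p+q)×(p+q) block matrix, let E ∈ ℝ and ε, γ > 0, and assume D − E·I is invertible with ‖(D−E·I)⁻¹‖ ≤ 1/ε, ‖B‖ ≤ γ, and ‖C‖ ≤ γ (operator norms). Then for every λ ∈ ℝ with |λ − E| ≤ ε/2, the matrix D − λ·I is invertible with ‖(D−λ·I)⁻¹‖ ≤ 2/ε, and the Schur complements F_μ := A − B(D−μ·I)⁻¹C satisfy ‖F_E − F_λ‖ ≤ (2γ²/ε²)·|λ − E|. -/

import Mathlib

open Matrix

/-- The operator norm of a real matrix acting between Euclidean spaces. -/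
noncomputable def opNorm {m n : Type*} [Fintype m] [Fintype n] [DecidableEq n]
    (M : Matrix m n ℝ) : ℝ :=
  ‖LinearMap.toContinuousLinearMap (Matrix.toEuclideanLin M)‖

noncomputable def toCLM {m n : Type*} [Fintype m] [Fintype n] [DecidableEq n]
    (M : Matrix m n ℝ) : EuclideanSpace ℝ n →L[ℝ] EuclideanSpace ℝ m :=
  LinearMap.toContinuousLinearMap (Matrix.toEuclideanLin M)

lemma opNorm_eq {m n : Type*} [Fintype m] [Fintype n] [DecidableEq n]
    (M : Matrix m n ℝ) : opNorm M = ‖toCLM M‖ := rfl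

lemma toCLM_eq_toEuclideanCLM {n : Type*} [Fintype n] [DecidableEq n]
    (M : Matrix n n ℝ) : toCLM M = Matrix.toEuclideanCLM (𝕜 := ℝ) M := by
  ext x
  rfl

lemma toCLM_mul {l m n : Type*} [Fintype l] [Fintype m] [Fintype n]
    [DecidableEq m] [DecidableEq n]
    (M : Matrix l m ℝ) (N : Matrix m n ℝ) :
    toCLM (M * N) = (toCLM M).comp (toCLM N) := by
  apply ContinuousLinearMap.coe_injective
  show (Matrix.toEuclideanLin (M * N) : _ →ₗ[ℝ] _) = _
  rw [Matrix.toEuclideanLin_eq_toLin, Matrix.toLin_mul _ (EuclideanSpace.basisFun m ℝ).toBasis]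
  rfl

lemma opNorm_mul_le {l m n : Type*} [Fintype l] [Fintype m] [Fintype n]
    [DecidableEq m] [DecidableEq n]
    (M : Matrix l m ℝ) (N : Matrix m n ℝ) :
    opNorm (M * N) ≤ opNorm M * opNorm N := by
  rw [opNorm_eq, opNorm_eq, opNorm_eq, toCLM_mul]
  exact ContinuousLinearMap.opNorm_comp_le _ _

lemma opNorm_smul {m n : Type*} [Fintype m] [Fintype n] [DecidableEq n]
    (c : ℝ) (M : Matrix m n ℝ) : opNorm (c • M) = |c| * opNorm M := by
  rw [opNorm_eq, opNorm_eq]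
  have : toCLM (c • M) = c • toCLM M := by
    apply ContinuousLinearMap.coe_injective
    show (Matrix.toEuclideanLin (c • M) : _ →ₗ[ℝ] _) = _
    simp
    rfl
  rw [this]
  rw [norm_smul c (toCLM M), Real.norm_eq_abs]

lemma opNorm_nonneg {m n : Type*} [Fintype m] [Fintype n] [DecidableEq n]
    (M : Matrix m n ℝ) : 0 ≤ opNorm M := norm_nonneg _

lemma opNorm_add_le {m n : Type*} [Fintype m] [Fintype n] [DecidableEq n]
    (M N : Matrix m n ℝ) : opNorm (M + N) ≤ opNorm M + opNorm N := by
  rw [opNorm_eq, opNorm_eq, opNorm_eq]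
  have : toCLM (M + N) = toCLM M + toCLM N := by
    apply ContinuousLinearMap.coe_injective
    show (Matrix.toEuclideanLin (M + N) : _ →ₗ[ℝ] _) = _
    simp
    rfl
  rw [this]
  exact norm_add_le _ _

/-- If `‖(D-E·I)⁻¹‖ ≤ 1/ε`, `‖B‖ ≤ γ`, `‖C‖ ≤ γ`, then for `|λ-E| ≤ ε/2`
the matrix `D - λ·I` is invertible with `‖(D-λ·I)⁻¹‖ ≤ 2/ε`, and the Schur complements
satisfy `‖F_E - F_λ‖ ≤ (2γ²/ε²)·|λ-E|`. -/
theorem schur_complement_shift {p q : ℕ}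
    (A : Matrix (Fin p) (Fin p) ℝ) (B : Matrix (Fin p) (Fin q) ℝ)
    (C : Matrix (Fin q) (Fin p) ℝ) (D : Matrix (Fin q) (Fin q) ℝ)
    (E ε γ : ℝ) (hε : 0 < ε) (hγ : 0 < γ)
    (hDE : IsUnit (D - E • (1 : Matrix (Fin q) (Fin q) ℝ)))
    (hDEinv : opNorm (D - E • 1)⁻¹ ≤ 1 / ε)
    (hB : opNorm B ≤ γ) (hC : opNorm C ≤ γ)
    (lam : ℝ) (hlam : |lam - E| ≤ ε / 2) :
    IsUnit (D - lam • (1 : Matrix (Fin q) (Fin q) ℝ)) ∧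
    opNorm (D - lam • 1)⁻¹ ≤ 2 / ε ∧
    opNorm ((A - B * (D - E • 1)⁻¹ * C) - (A - B * (D - lam • 1)⁻¹ * C)) ≤
      2 * γ ^ 2 / ε ^ 2 * |lam - E| := by
  set R := (D - E • (1 : Matrix (Fin q) (Fin q) ℝ))⁻¹ with hR
  set δ := lam - E with hδ
  have hdet : IsUnit (D - E • (1 : Matrix (Fin q) (Fin q) ℝ)).det :=
    (Matrix.isUnit_iff_isUnit_det _).mp hDE
  have hRl : R * (D - E • 1) = 1 := Matrix.nonsing_inv_mul _ hdet
  have hRr : (D - E • 1) * R = 1 := Matrix.mul_nonsing_inv _ hdet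
  -- invertibility of 1 - δ • R
  have hnorm_δR : ‖Matrix.toEuclideanCLM (𝕜 := ℝ) (δ • R)‖ < 1 := by
    rw [← toCLM_eq_toEuclideanCLM, ← opNorm_eq, opNorm_smul]
    have h1 : |δ| * opNorm R ≤ (ε / 2) * (1 / ε) :=
      mul_le_mul hlam hDEinv (opNorm_nonneg _) (by positivity)
    have : (ε / 2) * (1 / ε) = 1 / 2 := by field_simp
    linarith [this ▸ h1]
  have hunit1 : IsUnit ((1 : Matrix (Fin q) (Fin q) ℝ) - δ • R) := by
    set u := Units.oneSub _ hnorm_δR with hu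
    set e := Matrix.toEuclideanCLM (𝕜 := ℝ) (n := Fin q)
    have h2 : e ((1 : Matrix (Fin q) (Fin q) ℝ) - δ • R) = ↑u := by
      rw [map_sub, _root_.map_one e, hu, Units.val_oneSub]
    apply (Matrix.isUnit_iff_isUnit_det _).mpr (Matrix.isUnit_det_of_right_inverse (B := e.symm ↑u⁻¹) ?_)
    apply e.injective
    show e ((1 - δ • R) * e.symm ↑u⁻¹) = e 1
    rw [_root_.map_mul e, h2, StarAlgEquiv.apply_symm_apply, u.mul_inv, _root_.map_one e]
  have hfac : ((1 : Matrix (Fin q) (Fin q) ℝ) - δ • R) * (D - E • 1) = D - lam • 1 := by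
    rw [sub_mul, one_mul, smul_mul_assoc, hRl, sub_sub, ← add_smul,
      show E + δ = lam by rw [hδ]; ring]
  have hunit_lam : IsUnit (D - lam • (1 : Matrix (Fin q) (Fin q) ℝ)) := by
    rw [← hfac]; exact hunit1.mul hDE
  have hdetl : IsUnit (D - lam • (1 : Matrix (Fin q) (Fin q) ℝ)).det :=
    (Matrix.isUnit_iff_isUnit_det _).mp hunit_lam
  set Rl := (D - lam • (1 : Matrix (Fin q) (Fin q) ℝ))⁻¹ with hRl'
  have hRll : Rl * (D - lam • 1) = 1 := Matrix.nonsing_inv_mul _ hdetl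
  -- resolvent identity
  have key : Rl - R = δ • (Rl * R) := by
    have h1 : Rl * ((D - E • 1) - (D - lam • 1)) * R = Rl - R := by
      rw [mul_sub, sub_mul, mul_assoc Rl (D - E • 1) R, hRr, mul_one, hRll, one_mul]
    have h2 : (D - E • (1 : Matrix (Fin q) (Fin q) ℝ)) - (D - lam • 1) = δ • 1 := by
      rw [sub_sub_sub_cancel_left, ← sub_smul]
    rw [← h1, h2, mul_smul_comm, mul_one, smul_mul_assoc]
  have hRnn := opNorm_nonneg R
  have hRlnn := opNorm_nonneg Rl
  have hRlRnn := opNorm_nonneg (Rl * R)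
  have hRlR : opNorm (Rl * R) ≤ opNorm Rl * opNorm R := opNorm_mul_le _ _
  have hδnn : (0 : ℝ) ≤ |δ| := abs_nonneg _
  -- norm bound on Rl
  have hRlbound : opNorm Rl ≤ 2 / ε := by
    have h3 : Rl = R + δ • (Rl * R) := by rw [← key]; abel
    have h4 : opNorm Rl ≤ opNorm R + |δ| * opNorm (Rl * R) := by
      calc opNorm Rl = opNorm (R + δ • (Rl * R)) := by rw [← h3]
        _ ≤ opNorm R + opNorm (δ • (Rl * R)) := opNorm_add_le _ _
        _ = opNorm R + |δ| * opNorm (Rl * R) := by rw [opNorm_smul]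
    have h5 : |δ| * opNorm (Rl * R) ≤ (ε / 2) * (opNorm Rl * (1 / ε)) := by
      nlinarith [mul_le_mul hlam hRlR hRlRnn (by positivity : (0:ℝ) ≤ ε/2),
        mul_le_mul (le_refl (opNorm Rl)) hDEinv hRnn hRlnn]
    have h6 : (ε / 2) * (opNorm Rl * (1 / ε)) = opNorm Rl / 2 := by field_simp
    have h7 : opNorm Rl ≤ 1 / ε + opNorm Rl / 2 := by
      rw [← h6]; linarith
    have h8 : opNorm Rl / 2 ≤ 1 / ε := by linarith
    calc opNorm Rl = 2 * (opNorm Rl / 2) := by ring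
      _ ≤ 2 * (1 / ε) := by linarith
      _ = 2 / ε := by ring
  refine ⟨hunit_lam, hRlbound, ?_⟩
  -- final bound
  have hdiff : (A - B * R * C) - (A - B * Rl * C) = δ • (B * (Rl * R) * C) := by
    have : (A - B * R * C) - (A - B * Rl * C) = B * (Rl - R) * C := by
      rw [Matrix.mul_sub B Rl R, Matrix.sub_mul (B * Rl) (B * R) C]
      abel
    rw [this, key, Matrix.mul_smul, Matrix.smul_mul]
  rw [hdiff, opNorm_smul]
  have hBC : opNorm (B * (Rl * R) * C) ≤ γ * (2 / ε * (1 / ε)) * γ := by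
    calc opNorm (B * (Rl * R) * C) ≤ opNorm (B * (Rl * R)) * opNorm C := opNorm_mul_le _ _
      _ ≤ opNorm B * opNorm (Rl * R) * opNorm C := by
          apply mul_le_mul_of_nonneg_right (opNorm_mul_le _ _) (opNorm_nonneg _)
      _ ≤ γ * (2 / ε * (1 / ε)) * γ := by
          have h1 : opNorm (Rl * R) ≤ 2 / ε * (1 / ε) := by
            calc opNorm (Rl * R) ≤ opNorm Rl * opNorm R := hRlR
              _ ≤ 2 / ε * (1 / ε) := by
                  apply mul_le_mul hRlbound hDEinv hRnn (by positivity)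
          have hBnn := opNorm_nonneg B
          nlinarith [mul_le_mul hB h1 hRlRnn hγ.le,
            mul_le_mul (mul_le_mul hB h1 hRlRnn hγ.le) hC (opNorm_nonneg C)
              (by positivity : (0:ℝ) ≤ γ * (2 / ε * (1 / ε)))]
  have hγε : γ * (2 / ε * (1 / ε)) * γ = 2 * γ ^ 2 / ε ^ 2 := by field_simp
  calc |δ| * opNorm (B * (Rl * R) * C) ≤ |δ| * (γ * (2 / ε * (1 / ε)) * γ) :=
        mul_le_mul_of_nonneg_left hBC hδnn
    _ = 2 * γ ^ 2 / ε ^ 2 * |δ| := by rw [hγε]; ring
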